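/- arXiv:1508.06523 — 3 statements merged into one kernel-verified Lean document; each statement's English description precedes it below -/
import Mathlib

section
/- Let $w(x) = ax + b$ with $a \neq 0$, and let $\mathcal{I} = \{x : ax+b > 0\}$. Define the one-step transition density $p_1(x|y,\sigma) = k_\sigma(x;y) w(x)/w(y)$ for $x, y \in \mathcal{I}$ (using that $\int k_\sigma(z;y) w(z)\,dz = w(y)$). Then for all $n \geq 1$ and all $x, y \in \mathcal{I}$, assuming all intermediate integrations are restricted to paths where the formula $p_1$ applies, the $n$-step density obtained by iterated convolution over $\mathbb{R}$, $p_n(x|y,\sigma) = \int_{\mathbb{R}^{n-1}} \prod_{k=1}^n p_1(x_k | x_{k-1}, \sigma)\, dx_1 \cdots dx_{n-1}$ (with $x_0 = y$, $x_n = x$), equals $p_1(x | y, \sqrt{n}\sigma)$, i.e., $p_n(x|y,\sigma) = k_{\sqrt{n}\sigma}(x;y)\, w(x)/w(y)$. -/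
open MeasureTheory Real

/-- Gaussian density with mean `m` and standard deviation `σ`, evaluated at `y`. -/
noncomputable def gauss (σ m y : ℝ) : ℝ :=
  (Real.sqrt (2 * Real.pi) * σ)⁻¹ * Real.exp (-(y - m) ^ 2 / (2 * σ ^ 2))

/-- One-step transition density with linear weighting function `w x = a x + b`,
using `∫ k σ (z;y) w(z) dz = w y` so that the normalization constant is `w y`.
Here `p1lin a b σ y x` is the density of a step from `y` to `x`. -/
noncomputable def p1lin (a b σ y x : ℝ) : ℝ :=
  gauss σ y x * (a * x + b) / (a * y + b)

/-- `pnlin a b σ n y x` is the `(n+1)`-step density obtained by the iterated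
(Chapman–Kolmogorov) integration over the intermediate locations. -/
noncomputable def pnlin (a b σ : ℝ) : ℕ → ℝ → ℝ → ℝ
  | 0 => fun y x => p1lin a b σ y x
  | (m + 1) => fun y x => ∫ z : ℝ, pnlin a b σ m y z * p1lin a b σ z x

lemma gauss_conv (σ τ y x : ℝ) (hσ : 0 < σ) (hτ : 0 < τ) :
    ∫ z : ℝ, gauss τ y z * gauss σ z x = gauss (Real.sqrt (τ^2 + σ^2)) y x := by
  have hd : (0:ℝ) < τ^2 + σ^2 := by positivity
  set d : ℝ := τ^2 + σ^2 with hdef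
  set β : ℝ := d / (2 * τ^2 * σ^2) with hβ
  have hβpos : 0 < β := by positivity
  set c : ℝ := (σ^2 * y + τ^2 * x) / d with hc
  have key : ∀ z : ℝ, gauss τ y z * gauss σ z x
      = ((Real.sqrt (2*Real.pi) * τ)⁻¹ * (Real.sqrt (2*Real.pi) * σ)⁻¹
          * Real.exp (-(x - y)^2 / (2 * d))) * Real.exp (-β * (z - c)^2) := by
    intro z
    have hexp : -(z - y)^2/(2*τ^2) + -(x - z)^2/(2*σ^2)
        = -(x-y)^2/(2*d) + -β*(z-c)^2 := by
      rw [hβ, hc, hdef]; field_simp; ring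
    simp only [gauss]
    rw [mul_mul_mul_comm, ← Real.exp_add, hexp, Real.exp_add, ← mul_assoc]
  simp_rw [key]
  rw [integral_const_mul]
  have hint : ∫ z : ℝ, Real.exp (-β * (z - c)^2) = Real.sqrt (π / β) := by
    rw [← integral_gaussian β]
    exact MeasureTheory.integral_sub_right_eq_self (fun u => Real.exp (-β * u^2)) c
  rw [hint]
  have hsπ : (0:ℝ) < Real.sqrt (2*π) := Real.sqrt_pos.mpr (by positivity)
  have hsd : (0:ℝ) < Real.sqrt d := Real.sqrt_pos.mpr hd
  have hsq : Real.sqrt (π / β) = Real.sqrt (2 * π) * τ * σ / Real.sqrt d := by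
    have h1 : π / β = (2*π) * τ^2 * σ^2 / d := by rw [hβ]; field_simp
    rw [h1, Real.sqrt_div (by positivity), Real.sqrt_mul (by positivity),
      Real.sqrt_mul (by positivity), Real.sqrt_sq hτ.le, Real.sqrt_sq hσ.le, mul_assoc]
  rw [hsq, gauss, Real.sq_sqrt hd.le]
  field_simp

lemma pnlin_eq (a b σ : ℝ) (ha : a ≠ 0) (hσ : 0 < σ) (y : ℝ) (hy : a * y + b ≠ 0) :
    ∀ (m : ℕ) (x : ℝ),
      pnlin a b σ m y x = gauss (Real.sqrt (m + 1) * σ) y x * (a * x + b) / (a * y + b) := by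
  intro m
  induction m with
  | zero =>
      intro x
      simp [pnlin, p1lin]
  | succ m ih =>
      intro x
      have hm1 : (0:ℝ) < (m:ℝ) + 1 := by positivity
      set τ : ℝ := Real.sqrt ((m:ℝ) + 1) * σ with hτdef
      have hτ : 0 < τ := by positivity
      have h0 : volume {z : ℝ | a * z + b = 0} = 0 := by
        have : {z : ℝ | a * z + b = 0} = {-b / a} := by
          ext z
          simp only [Set.mem_setOf_eq, Set.mem_singleton_iff]
          constructor
          · intro h; field_simp; linarith
          · intro h; subst h; field_simp; ring
        rw [this]; exact measure_singleton _
      have hae : (fun z => pnlin a b σ m y z * p1lin a b σ z x)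
          =ᵐ[volume] fun z => gauss τ y z * gauss σ z x * ((a * x + b) / (a * y + b)) := by
        refine MeasureTheory.ae_iff.mpr (measure_mono_null ?_ h0)
        intro z hz
        simp only [Set.mem_setOf_eq] at hz ⊢
        by_contra hzb
        apply hz
        rw [ih z, p1lin]
        field_simp
      show (∫ z : ℝ, pnlin a b σ m y z * p1lin a b σ z x) = _
      rw [MeasureTheory.integral_congr_ae hae, integral_mul_const,
        gauss_conv σ τ y x hσ hτ]
      have hτsq : τ ^ 2 + σ ^ 2 = ((m:ℝ) + 2) * σ ^ 2 := by
        rw [hτdef, mul_pow, Real.sq_sqrt hm1.le]; ring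
      have hs : Real.sqrt (τ ^ 2 + σ ^ 2) = Real.sqrt ((m:ℝ) + 2) * σ := by
        rw [hτsq, Real.sqrt_mul (by positivity), Real.sqrt_sq hσ.le]
      rw [hs]
      have hc : ((m:ℕ) + 1 + 1 : ℝ) = (m:ℝ) + 2 := by push_cast; ring
      push_cast
      rw [mul_div_assoc]
      ring_nf

theorem linear_weight_robust (a b σ : ℝ) (ha : a ≠ 0) (hσ : 0 < σ) (n : ℕ) (hn : 1 ≤ n)
    (x y : ℝ) (hx : 0 < a * x + b) (hy : 0 < a * y + b) :
    pnlin a b σ (n - 1) y x =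
      gauss (Real.sqrt n * σ) y x * (a * x + b) / (a * y + b) := by
  obtain ⟨m, rfl⟩ : ∃ m, n = m + 1 := ⟨n - 1, (Nat.succ_pred_eq_of_pos hn).symm⟩
  have := pnlin_eq a b σ ha hσ y hy.ne' m x
  simpa [Nat.add_sub_cancel] using this
end

section
/- Let $w : \mathbb{R} \to \mathbb{R}$ be continuous, positive, and such that $\int k_\sigma(z;y) w(z)\,dz$ is finite for all $y$ and $\sigma$. Define $p_1(x|y,\sigma) = k_\sigma(x;y) w(x) / \int_{\mathbb{R}} k_\sigma(z;y) w(z)\,dz$ and the two-step density $p_2(x|y,\sigma) = \int_{\mathbb{R}} p_1(x|z,\sigma)\, p_1(z|y,\sigma)\, dz$. Then $p_2(x|y,\sigma) = p_1(x|y,\sqrt{2}\sigma) \cdot v(x,y)$, where $v(x,y) = \frac{\int k_{\sqrt{2}\sigma}(u;y) w(u)\,du}{\int k_\sigma(u;y) w(u)\,du} \cdot \int_{\mathbb{R}} k_{\sigma/\sqrt{2}}\big(z; \tfrac{1}{2}(x+y)\big) \frac{w(z)}{\int k_\sigma(u;z) w(u)\,du}\, dz$. -/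
open MeasureTheory Real

lemma gauss_pos (σ m y : ℝ) (hσ : 0 < σ) : 0 < gauss σ m y := by
  unfold gauss
  have h2π : 0 < Real.sqrt (2 * Real.pi) := Real.sqrt_pos.2 (by positivity)
  positivity

lemma gauss_mul (σ : ℝ) (hσ : 0 < σ) (x y z : ℝ) :
    gauss σ z x * gauss σ y z =
      gauss (Real.sqrt 2 * σ) y x * gauss (σ / Real.sqrt 2) ((x + y) / 2) z := by
  have h2 : Real.sqrt 2 * Real.sqrt 2 = 2 := Real.mul_self_sqrt (by norm_num)
  have hs2 : (0:ℝ) < Real.sqrt 2 := Real.sqrt_pos.2 (by norm_num)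
  have h2π : Real.sqrt (2 * Real.pi) * Real.sqrt (2 * Real.pi) = 2 * Real.pi :=
    Real.mul_self_sqrt (by positivity)
  have h2πpos : 0 < Real.sqrt (2 * Real.pi) := Real.sqrt_pos.2 (by positivity)
  unfold gauss
  rw [mul_mul_mul_comm, ← Real.exp_add, mul_mul_mul_comm, ← Real.exp_add]
  congr 1
  · field_simp
  · congr 1
    have e1 : (Real.sqrt 2 * σ) ^ 2 = 2 * σ ^ 2 := by
      rw [mul_pow, Real.sq_sqrt (by norm_num : (0:ℝ) ≤ 2)]
    have e2 : (σ / Real.sqrt 2) ^ 2 = σ ^ 2 / 2 := by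
      rw [div_pow, Real.sq_sqrt (by norm_num : (0:ℝ) ≤ 2)]
    rw [e1, e2]
    field_simp
    ring

lemma integral_gauss_w_pos (w : ℝ → ℝ) (hw_pos : ∀ x, 0 < w x)
    (hw_int : ∀ σ : ℝ, 0 < σ → ∀ y : ℝ, Integrable (fun z => gauss σ y z * w z))
    (σ : ℝ) (hσ : 0 < σ) (y : ℝ) : 0 < ∫ u : ℝ, gauss σ y u * w u := by
  rw [integral_pos_iff_support_of_nonneg
      (fun u => le_of_lt (mul_pos (gauss_pos σ y u hσ) (hw_pos u))) (hw_int σ hσ y)]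
  have : (Function.support fun u => gauss σ y u * w u) = Set.univ := by
    ext u
    simp only [Function.mem_support, Set.mem_univ, iff_true]
    exact (mul_pos (gauss_pos σ y u hσ) (hw_pos u)).ne'
  rw [this]
  simp

theorem two_step_decomposition (w : ℝ → ℝ) (hw_cont : Continuous w)
    (hw_pos : ∀ x, 0 < w x)
    (hw_int : ∀ σ : ℝ, 0 < σ → ∀ y : ℝ, Integrable (fun z => gauss σ y z * w z))
    (σ : ℝ) (hσ : 0 < σ) (x y : ℝ) :
    (∫ z : ℝ, (gauss σ z x * w x / ∫ u : ℝ, gauss σ z u * w u) *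
        (gauss σ y z * w z / ∫ u : ℝ, gauss σ y u * w u)) =
      (gauss (Real.sqrt 2 * σ) y x * w x / ∫ u : ℝ, gauss (Real.sqrt 2 * σ) y u * w u) *
        ((∫ u : ℝ, gauss (Real.sqrt 2 * σ) y u * w u) / (∫ u : ℝ, gauss σ y u * w u) *
          ∫ z : ℝ, gauss (σ / Real.sqrt 2) ((x + y) / 2) z *
            (w z / ∫ u : ℝ, gauss σ z u * w u)) := by
  have hs2 : (0:ℝ) < Real.sqrt 2 := Real.sqrt_pos.2 (by norm_num)
  have hJ : 0 < ∫ u : ℝ, gauss (Real.sqrt 2 * σ) y u * w u :=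
    integral_gauss_w_pos w hw_pos hw_int _ (mul_pos hs2 hσ) y
  have hIy : 0 < ∫ u : ℝ, gauss σ y u * w u :=
    integral_gauss_w_pos w hw_pos hw_int σ hσ y
  have key : ∀ z : ℝ,
      (gauss σ z x * w x / ∫ u : ℝ, gauss σ z u * w u) *
        (gauss σ y z * w z / ∫ u : ℝ, gauss σ y u * w u) =
      (w x / ∫ u : ℝ, gauss σ y u * w u) *
        (gauss (Real.sqrt 2 * σ) y x *
          (gauss (σ / Real.sqrt 2) ((x + y) / 2) z *
            (w z / ∫ u : ℝ, gauss σ z u * w u))) := by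
    intro z
    have h := gauss_mul σ hσ x y z
    have hIz : 0 < ∫ u : ℝ, gauss σ z u * w u :=
      integral_gauss_w_pos w hw_pos hw_int σ hσ z
    field_simp [hIz.ne', hIy.ne']
    linear_combination
      (w x * w z) * h
  rw [show (∫ z : ℝ, (gauss σ z x * w x / ∫ u : ℝ, gauss σ z u * w u) *
        (gauss σ y z * w z / ∫ u : ℝ, gauss σ y u * w u)) =
      ∫ z : ℝ, (w x / ∫ u : ℝ, gauss σ y u * w u) *
        (gauss (Real.sqrt 2 * σ) y x *
          (gauss (σ / Real.sqrt 2) ((x + y) / 2) z *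
            (w z / ∫ u : ℝ, gauss σ z u * w u))) from integral_congr_ae
      (Filter.Eventually.of_forall key)]
  rw [integral_const_mul, integral_const_mul]
  field_simp [hJ.ne', hIy.ne']
end

section
/- Let $w : \mathbb{R} \to \mathbb{R}$ be twice differentiable with $0 < L \leq w \leq U$ and $|w''| \leq M$ everywhere. Define $Q(x;\sigma) = \frac{\int k_{\sqrt{2}\sigma}(y;x) w(y)\,dy}{\int k_\sigma(y;x) w(y)\,dy}$. Then for all $x \in \mathbb{R}$ and $\sigma > 0$ with $M\sigma^2 < 2L$, we have $\frac{w(x) - M\sigma^2}{w(x) + \tfrac{M}{2}\sigma^2} \leq Q(x;\sigma) \leq \frac{w(x) + M\sigma^2}{w(x) - \tfrac{M}{2}\sigma^2}$. -/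
open MeasureTheory Real Filter Set

/-- The ratio `Q` of the Gaussian-weighted integrals of `w` with standard deviations
`√2 σ` and `σ`. -/
noncomputable def Qfun (w : ℝ → ℝ) (σ x : ℝ) : ℝ :=
  (∫ y : ℝ, gauss (Real.sqrt 2 * σ) x y * w y) / ∫ y : ℝ, gauss σ x y * w y

lemma odd_int (b : ℝ) : ∫ t : ℝ, t * Real.exp (-b * t ^ 2) = 0 := by
  have h : ∀ t : ℝ, (-t) * Real.exp (-b * (-t) ^ 2) = -(t * Real.exp (-b * t ^ 2)) := by
    intro t; ring_nf
  have := MeasureTheory.integral_neg_eq_self (fun t : ℝ => t * Real.exp (-b * t ^ 2)) volume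
  simp only [h] at this
  rw [integral_neg] at this
  linarith

lemma int_sq_exp (b : ℝ) (hb : 0 < b) :
    Integrable (fun t : ℝ => t ^ 2 * Real.exp (-b * t ^ 2)) := by
  have key : ∀ t : ℝ, ‖t ^ 2 * Real.exp (-b * t ^ 2)‖ ≤ (2 / b) * Real.exp (-(b/2) * t ^ 2) := by
    intro t
    have h1 : b / 2 * t ^ 2 ≤ Real.exp (b / 2 * t ^ 2) := by
      have := Real.add_one_le_exp (b / 2 * t ^ 2); linarith
    have ht2 : t ^ 2 ≤ (2 / b) * Real.exp (b / 2 * t ^ 2) := by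
      rw [← sub_nonneg]
      calc (0:ℝ) ≤ (2/b) * (Real.exp (b/2 * t^2) - b/2 * t^2) :=
            mul_nonneg (by positivity) (by linarith)
        _ = (2 / b) * Real.exp (b / 2 * t ^ 2) - t ^ 2 := by field_simp
    have hnn : (0:ℝ) ≤ t ^ 2 * Real.exp (-b * t ^ 2) := by positivity
    rw [Real.norm_of_nonneg hnn]
    calc t ^ 2 * Real.exp (-b * t ^ 2)
        ≤ ((2 / b) * Real.exp (b / 2 * t ^ 2)) * Real.exp (-b * t ^ 2) :=
          mul_le_mul_of_nonneg_right ht2 (Real.exp_pos _).le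
      _ = (2 / b) * Real.exp (-(b/2) * t ^ 2) := by
          rw [mul_assoc, ← Real.exp_add]; ring_nf
  exact Integrable.mono' ((integrable_exp_neg_mul_sq (by linarith : (0:ℝ) < b/2)).const_mul _)
    (Continuous.aestronglyMeasurable (by continuity)) (Filter.Eventually.of_forall key)

lemma sq_moment (b : ℝ) (hb : 0 < b) :
    ∫ t : ℝ, t ^ 2 * Real.exp (-b * t ^ 2) = Real.sqrt (π / b) / (2 * b) := by
  set f : ℝ → ℝ := fun t => -t * Real.exp (-b * t ^ 2) with hf
  set f' : ℝ → ℝ := fun t => 2 * b * t ^ 2 * Real.exp (-b * t ^ 2) - Real.exp (-b * t ^ 2) with hf'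
  have hderiv : ∀ t : ℝ, HasDerivAt f (f' t) t := by
    intro t
    have h1 : HasDerivAt (fun t : ℝ => Real.exp (-b * t ^ 2)) (Real.exp (-b * t ^ 2) * (-b * (2 * t))) t := by
      have := ((hasDerivAt_pow 2 t).const_mul (-b)).exp
      simpa [mul_comm] using this
    have := (hasDerivAt_neg t).mul h1
    refine this.congr_deriv ?_
    simp [f']; ring
  have hint : Integrable f' := by
    apply Integrable.sub
    · exact ((int_sq_exp b hb).const_mul (2 * b)).congr (by filter_upwards with t; ring_nf)
    · exact integrable_exp_neg_mul_sq hb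
  have hlim : Tendsto f (Filter.cocompact ℝ) (nhds 0) := by
    rw [tendsto_zero_iff_norm_tendsto_zero]
    have h := tendsto_rpow_abs_mul_exp_neg_mul_sq_cocompact hb 1
    refine h.congr (fun t => ?_)
    rw [Real.rpow_one]
    simp [f, abs_mul, Real.abs_exp]
  have hbot : Tendsto f atBot (nhds 0) := hlim.mono_left (by
    rw [cocompact_eq_atBot_atTop]; exact le_sup_left)
  have htop : Tendsto f atTop (nhds 0) := hlim.mono_left (by
    rw [cocompact_eq_atBot_atTop]; exact le_sup_right)
  have h0 : ∫ t, f' t = 0 - 0 := integral_of_hasDerivAt_of_tendsto hderiv hint hbot htop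
  rw [integral_sub (((int_sq_exp b hb).const_mul (2 * b)).congr (by filter_upwards with t; ring_nf))
    (integrable_exp_neg_mul_sq hb)] at h0
  have h1 : ∫ t : ℝ, 2 * b * t ^ 2 * Real.exp (-b * t ^ 2)
      = 2 * b * ∫ t : ℝ, t ^ 2 * Real.exp (-b * t ^ 2) := by
    rw [← MeasureTheory.integral_const_mul]; congr 1 with t; ring
  rw [h1, integral_gaussian] at h0
  have : 2 * b ≠ 0 := by positivity
  field_simp at h0 ⊢
  linarith

-- helper: one-sided quadratic bound
lemma quad_bound {φ φ' : ℝ → ℝ} {M x0 : ℝ}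
    (hd : ∀ t, HasDerivAt φ (φ' t) t) (h0 : φ x0 = 0)
    (hb : ∀ t, |φ' t| ≤ M * |t - x0|) (y : ℝ) :
    φ y ≤ M / 2 * (y - x0) ^ 2 := by
  set F : ℝ → ℝ := fun t => M / 2 * (t - x0) ^ 2 - φ t with hF
  have hFd : ∀ t, HasDerivAt F (M * (t - x0) - φ' t) t := by
    intro t
    have h1 : HasDerivAt (fun t : ℝ => M / 2 * (t - x0) ^ 2) (M * (t - x0)) t := by
      have := (((hasDerivAt_id t).sub_const x0).pow 2).const_mul (M / 2)
      refine this.congr_deriv ?_; simp; ring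
    exact h1.sub (hd t)
  have hcont : Continuous F := by
    have : Differentiable ℝ F := fun t => (hFd t).differentiableAt
    exact this.continuous
  have key : 0 ≤ F y := by
    rcases le_total x0 y with hxy | hxy
    · have hmono : MonotoneOn F (Ici x0) := by
        apply monotoneOn_of_deriv_nonneg (convex_Ici x0) hcont.continuousOn
        · exact fun t _ => (hFd t).differentiableAt.differentiableWithinAt
        · intro t ht
          rw [(hFd t).deriv]
          rw [interior_Ici] at ht
          have := hb t
          rw [abs_of_nonneg (by simp at ht; linarith : (0:ℝ) ≤ t - x0)] at this
          have := abs_le.mp (hb t)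
          rw [abs_of_nonneg (by simp at ht; linarith : (0:ℝ) ≤ t - x0)] at this
          linarith [this.2]
      have := hmono (self_mem_Ici) (mem_Ici.mpr hxy) hxy
      simpa [F, h0] using this
    · have hanti : AntitoneOn F (Iic x0) := by
        apply antitoneOn_of_deriv_nonpos (convex_Iic x0) hcont.continuousOn
        · exact fun t _ => (hFd t).differentiableAt.differentiableWithinAt
        · intro t ht
          rw [(hFd t).deriv]
          rw [interior_Iic] at ht
          have := abs_le.mp (hb t)
          rw [abs_of_nonpos (by simp at ht; linarith : t - x0 ≤ 0)] at this
          linarith [this.1]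
      have := hanti (mem_Iic.mpr hxy) self_mem_Iic hxy
      simpa [F, h0] using this
  simpa [F, sub_nonneg] using key

lemma taylor_bound (w w' w'' : ℝ → ℝ) (M : ℝ)
    (hw' : ∀ x, HasDerivAt w (w' x) x)
    (hw'' : ∀ x, HasDerivAt w' (w'' x) x)
    (hM : ∀ x, |w'' x| ≤ M) (x y : ℝ) :
    |w y - w x - w' x * (y - x)| ≤ M / 2 * (y - x) ^ 2 := by
  have hM0 : 0 ≤ M := le_trans (abs_nonneg _) (hM 0)
  have hLip : ∀ t, |w' t - w' x| ≤ M * |t - x| := by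
    intro t
    have := Convex.norm_image_sub_le_of_norm_hasDerivWithin_le
      (f := w') (f' := w'') (C := M) (s := univ)
      (fun u _ => (hw'' u).hasDerivWithinAt) (fun u _ => by simpa using hM u)
      convex_univ (mem_univ x) (mem_univ t)
    simpa [Real.norm_eq_abs] using this
  set φ : ℝ → ℝ := fun t => w t - w x - w' x * (t - x) with hφ
  have hφd : ∀ t, HasDerivAt φ (w' t - w' x) t := by
    intro t
    have h1 : HasDerivAt (fun t : ℝ => w' x * (t - x)) (w' x) t := by
      simpa using ((hasDerivAt_id t).sub_const x).const_mul (w' x)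
    exact ((hw' t).sub_const (w x)).sub h1
  have hφ0 : φ x = 0 := by simp [φ]
  have h1 := quad_bound hφd hφ0 hLip y
  have h2 := quad_bound (φ := fun t => -φ t) (φ' := fun t => -(w' t - w' x)) (M := M) (x0 := x)
    (fun t => (hφd t).neg) (by simp [hφ0]) (fun t => by rw [abs_neg]; exact hLip t) y
  rw [abs_le]; constructor <;> simp [φ] at h1 h2 ⊢ <;> linarith

section
variable {s x : ℝ} (hs : 0 < s)

lemma gauss_eq (y : ℝ) :
    gauss s x y = (Real.sqrt (2 * π) * s)⁻¹ * Real.exp (-(2 * s ^ 2)⁻¹ * (y - x) ^ 2) := by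
  rw [gauss]; congr 1; rw [neg_div]; ring_nf

include hs

lemma gauss_nonneg (y : ℝ) : 0 ≤ gauss s x y := by
  rw [gauss_eq]
  have h1 : (0:ℝ) < Real.sqrt (2 * π) * s := mul_pos (Real.sqrt_pos.mpr (by positivity)) hs
  exact mul_nonneg (inv_nonneg.mpr h1.le) (Real.exp_pos _).le

lemma hb_pos : (0:ℝ) < (2 * s ^ 2)⁻¹ := by
  have : (0:ℝ) < s ^ 2 := by positivity
  positivity

lemma sqrt_fact : Real.sqrt (π / (2 * s ^ 2)⁻¹) = Real.sqrt (2 * π) * s := by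
  rw [div_inv_eq_mul, show π * (2 * s ^ 2) = (2 * π) * s ^ 2 by ring,
    Real.sqrt_mul (by positivity), Real.sqrt_sq hs.le]

lemma gauss_I0 : Integrable (fun y => gauss s x y) := by
  simp_rw [gauss_eq]
  exact (((integrable_exp_neg_mul_sq (hb_pos hs)).comp_sub_right x).const_mul _)

lemma gauss_I1 : Integrable (fun y => gauss s x y * (y - x)) := by
  have h := ((integrable_mul_exp_neg_mul_sq (hb_pos hs)).comp_sub_right x).const_mul
    ((Real.sqrt (2 * π) * s)⁻¹)
  refine h.congr (Eventually.of_forall fun y => ?_)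
  simp only [gauss_eq]; ring

lemma gauss_I2 : Integrable (fun y => gauss s x y * (y - x) ^ 2) := by
  have h := ((int_sq_exp _ (hb_pos hs)).comp_sub_right x).const_mul
    ((Real.sqrt (2 * π) * s)⁻¹)
  refine h.congr (Eventually.of_forall fun y => ?_)
  simp only [gauss_eq]; ring

lemma gauss_J0 : ∫ y, gauss s x y = 1 := by
  have key : (fun y => gauss s x y)
      = fun y => (fun t => (Real.sqrt (2 * π) * s)⁻¹ * Real.exp (-(2 * s ^ 2)⁻¹ * t ^ 2)) (y - x) :=
    funext fun y => gauss_eq y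
  rw [key, integral_sub_right_eq_self (μ := volume)
      (fun t => (Real.sqrt (2 * π) * s)⁻¹ * Real.exp (-(2 * s ^ 2)⁻¹ * t ^ 2)) x,
    MeasureTheory.integral_const_mul, integral_gaussian, sqrt_fact hs]
  have h1 : Real.sqrt (2 * π) * s ≠ 0 :=
    ne_of_gt (mul_pos (Real.sqrt_pos.mpr (by positivity)) hs)
  field_simp

lemma gauss_J1 : ∫ y, gauss s x y * (y - x) = 0 := by
  have : ∀ y : ℝ, gauss s x y * (y - x)
      = (fun t => (Real.sqrt (2 * π) * s)⁻¹ * (t * Real.exp (-(2 * s ^ 2)⁻¹ * t ^ 2))) (y - x) := by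
    intro y; rw [gauss_eq]; ring
  rw [funext this, integral_sub_right_eq_self (μ := volume)
      (fun t => (Real.sqrt (2 * π) * s)⁻¹ * (t * Real.exp (-(2 * s ^ 2)⁻¹ * t ^ 2))) x,
    MeasureTheory.integral_const_mul, odd_int, mul_zero]

lemma gauss_J2 : ∫ y, gauss s x y * (y - x) ^ 2 = s ^ 2 := by
  have : ∀ y : ℝ, gauss s x y * (y - x) ^ 2
      = (fun t => (Real.sqrt (2 * π) * s)⁻¹ * (t ^ 2 * Real.exp (-(2 * s ^ 2)⁻¹ * t ^ 2))) (y - x) := by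
    intro y; rw [gauss_eq]; ring
  rw [funext this, integral_sub_right_eq_self (μ := volume)
      (fun t => (Real.sqrt (2 * π) * s)⁻¹ * (t ^ 2 * Real.exp (-(2 * s ^ 2)⁻¹ * t ^ 2))) x,
    MeasureTheory.integral_const_mul, sq_moment _ (hb_pos hs), sqrt_fact hs]
  have h1 : Real.sqrt (2 * π) ≠ 0 := ne_of_gt (Real.sqrt_pos.mpr (by positivity))
  have h2 : s ≠ 0 := ne_of_gt hs
  field_simp

end

lemma key_estimate (w w' w'' : ℝ → ℝ) (L U M : ℝ)
    (hw' : ∀ x, HasDerivAt w (w' x) x)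
    (hw'' : ∀ x, HasDerivAt w' (w'' x) x)
    (hM : ∀ x, |w'' x| ≤ M)
    (hL : 0 < L) (hLU : ∀ x, L ≤ w x ∧ w x ≤ U)
    (x s : ℝ) (hs : 0 < s) :
    |(∫ y : ℝ, gauss s x y * w y) - w x| ≤ M / 2 * s ^ 2 := by
  have hT : ∀ y, |w y - w x - w' x * (y - x)| ≤ M / 2 * (y - x) ^ 2 :=
    fun y => taylor_bound w w' w'' M hw' hw'' hM x y
  have hwcont : Continuous w :=
    Differentiable.continuous (fun t : ℝ => (hw' t).differentiableAt)
  have I4 : Integrable (fun y => gauss s x y * w y) := by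
    have hb : ∃ C, ∀ y, ‖w y‖ ≤ C :=
      ⟨U, fun y => by
        rw [Real.norm_eq_abs, abs_of_pos (lt_of_lt_of_le hL (hLU y).1)]
        exact (hLU y).2⟩
    exact ((gauss_I0 (x := x) hs).bdd_mul hwcont.aestronglyMeasurable (ae_of_all _ hb.choose_spec)).congr
      (Eventually.of_forall fun y => mul_comm _ _)
  have Iaux : Integrable (fun y => w x * gauss s x y + w' x * (gauss s x y * (y - x))) :=
    ((gauss_I0 (x := x) hs).const_mul (w x)).add ((gauss_I1 (x := x) hs).const_mul (w' x))
  have hrem : (fun y => gauss s x y * w y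
        - (w x * gauss s x y + w' x * (gauss s x y * (y - x))))
      = fun y => gauss s x y * (w y - w x - w' x * (y - x)) := by
    funext y; ring
  have Irem : Integrable (fun y => gauss s x y * (w y - w x - w' x * (y - x))) :=
    hrem ▸ (I4.sub Iaux)
  have heq : (∫ y : ℝ, gauss s x y * w y) - w x
      = ∫ y : ℝ, gauss s x y * (w y - w x - w' x * (y - x)) := by
    rw [← hrem, integral_sub I4 Iaux,
      integral_add ((gauss_I0 (x := x) hs).const_mul (w x)) ((gauss_I1 (x := x) hs).const_mul (w' x)),
      MeasureTheory.integral_const_mul, MeasureTheory.integral_const_mul,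
      gauss_J0 (x := x) hs, gauss_J1 (x := x) hs]
    ring
  rw [heq]
  have hmaj : Integrable (fun y => gauss s x y * (M / 2 * (y - x) ^ 2)) :=
    ((gauss_I2 (x := x) hs).const_mul (M / 2)).congr (Eventually.of_forall fun y => by ring)
  calc |∫ y : ℝ, gauss s x y * (w y - w x - w' x * (y - x))|
      ≤ ∫ y : ℝ, |gauss s x y * (w y - w x - w' x * (y - x))| :=
        by
        have h := norm_integral_le_integral_norm (μ := volume)
          (fun y : ℝ => gauss s x y * (w y - w x - w' x * (y - x)))
        simpa only [Real.norm_eq_abs] using h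
    _ ≤ ∫ y : ℝ, gauss s x y * (M / 2 * (y - x) ^ 2) := by
        refine integral_mono Irem.abs hmaj fun y => ?_
        rw [abs_mul, abs_of_nonneg (gauss_nonneg (x := x) hs y)]
        exact mul_le_mul_of_nonneg_left (hT y) (gauss_nonneg (x := x) hs y)
    _ = M / 2 * s ^ 2 := by
        rw [show (fun y : ℝ => gauss s x y * (M / 2 * (y - x) ^ 2))
            = fun y : ℝ => M / 2 * (gauss s x y * (y - x) ^ 2) from funext fun y => by ring,
          MeasureTheory.integral_const_mul, gauss_J2 (x := x) hs]

theorem Q_bounds (w w' w'' : ℝ → ℝ) (L U M : ℝ)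
    (hw' : ∀ x, HasDerivAt w (w' x) x)
    (hw'' : ∀ x, HasDerivAt w' (w'' x) x)
    (hM : ∀ x, |w'' x| ≤ M)
    (hL : 0 < L) (hLU : ∀ x, L ≤ w x ∧ w x ≤ U)
    (x σ : ℝ) (hσ : 0 < σ) (hsmall : M * σ ^ 2 < 2 * L) :
    (w x - M * σ ^ 2) / (w x + M / 2 * σ ^ 2) ≤ Qfun w σ x ∧
      Qfun w σ x ≤ (w x + M * σ ^ 2) / (w x - M / 2 * σ ^ 2) := by
  have hM0 : 0 ≤ M := le_trans (abs_nonneg _) (hM 0)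
  have hs2 : 0 < Real.sqrt 2 * σ := mul_pos (Real.sqrt_pos.mpr two_pos) hσ
  have hsq : (Real.sqrt 2 * σ) ^ 2 = 2 * σ ^ 2 := by
    rw [mul_pow, Real.sq_sqrt (by norm_num : (0:ℝ) ≤ 2)]
  set D := ∫ y : ℝ, gauss σ x y * w y with hD
  set N := ∫ y : ℝ, gauss (Real.sqrt 2 * σ) x y * w y with hN
  have hDkey := key_estimate w w' w'' L U M hw' hw'' hM hL hLU x σ hσ
  have hNkey := key_estimate w w' w'' L U M hw' hw'' hM hL hLU x (Real.sqrt 2 * σ) hs2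
  rw [hsq] at hNkey
  rw [abs_le] at hDkey hNkey
  have hwx : L ≤ w x := (hLU x).1
  have hDlow : w x - M / 2 * σ ^ 2 ≤ D := by have := hDkey.1; linarith
  have hDhigh : D ≤ w x + M / 2 * σ ^ 2 := by have := hDkey.2; linarith
  have hNlow : w x - M * σ ^ 2 ≤ N := by have := hNkey.1; linarith
  have hNhigh : N ≤ w x + M * σ ^ 2 := by have := hNkey.2; linarith
  have hDden : 0 < w x - M / 2 * σ ^ 2 := by nlinarith
  have hDpos : 0 < D := lt_of_lt_of_le hDden hDlow
  have hNnonneg : 0 ≤ N :=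
    integral_nonneg fun y => mul_nonneg (gauss_nonneg hs2 y) (le_trans hL.le (hLU y).1)
  have hQ : Qfun w σ x = N / D := rfl
  constructor
  · rw [hQ]
    exact div_le_div₀ hNnonneg hNlow hDpos hDhigh
  · rw [hQ]
    exact div_le_div₀ (by nlinarith) hNhigh hDden hDlow
end
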